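/- Let n = 2r+1 and let p_1, p_3, p_5, …, p_{2r+1} be the maximal-order Pfaffians of the tridiagonal skew-symmetric matrix X_3 (as squarefree monomials in x_{12}, …, x_{n−1,n}). Then this sequence of monomials is of interval type: for all indices i < j in the sequence and any variable x dividing gcd(p_i, p_j), x divides p_k for every k with i ≤ k ≤ j. -/

import Mathlib

open MvPolynomial

variable {K : Type*} [Field K]

/-- The variable `x_{v+1, v+2}` (one-based) of the tridiagonal
skew-symmetric matrix, i.e. the `v`-th superdiagonal variable (zero-based),
in `K[x_{12}, x_{23}, …, x_{n−1,n}]` with `n = 2r+1`. -/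
noncomputable def xvar (r : ℕ) (K : Type*) [Field K] (v : ℕ) :
    MvPolynomial (Fin (2 * r)) K :=
  if h : v < 2 * r then X ⟨v, h⟩ else 1

/-- The monomial generators of the Pfaffian ideal of the tridiagonal
skew-symmetric matrix: `p_1 = ∏_{k=1}^r x_{2k,2k+1}`, and for `i = 2p+1`
with `1 ≤ p ≤ r`, `p_i = x_{12} · ∏_{odd j, 3 ≤ j < i} x_{j,j+1} ·
∏_{even k, i < k ≤ 2r} x_{k,k+1}` (here indexed by `j = 0` for `p_1` and
`j = p` for `p_{2p+1}`). -/
noncomputable def pgen (r : ℕ) (K : Type*) [Field K] (j : Fin (r + 1)) :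
    MvPolynomial (Fin (2 * r)) K :=
  if j.val = 0 then ∏ t ∈ Finset.range r, xvar r K (2 * t + 1)
  else
    xvar r K 0 * (∏ t ∈ Finset.Ico 1 j.val, xvar r K (2 * t)) *
      ∏ t ∈ Finset.Ico j.val r, xvar r K (2 * t + 1)

lemma prime_X_fin (n : ℕ) (v : Fin n) :
    Prime (X v : MvPolynomial (Fin n) K) := by
  classical
  let e : MvPolynomial (Fin n) K ≃ₐ[K] Polynomial (MvPolynomial {b : Fin n // b ≠ v} K) :=
    (renameEquiv K (Equiv.optionSubtypeNe v).symm).trans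
      (optionEquivLeft K {b : Fin n // b ≠ v})
  rw [← MulEquiv.prime_iff e.toMulEquiv]
  show Prime (e (X v))
  have he : e (X v) = Polynomial.X := by
    simp only [e, AlgEquiv.trans_apply, renameEquiv_apply, rename_X,
      Equiv.optionSubtypeNe_symm_self, optionEquivLeft_X_none]
  rw [he]
  exact Polynomial.prime_X

lemma X_dvd_xvar_iff (r : ℕ) (v : Fin (2 * r)) (u : ℕ) :
    (X v : MvPolynomial (Fin (2 * r)) K) ∣ xvar r K u ↔ v.val = u := by
  unfold xvar
  split_ifs with h
  · rw [X_dvd_X]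
    constructor
    · rintro rfl; rfl
    · intro hv; exact Fin.ext hv
  · constructor
    · intro hd
      exact absurd (isUnit_of_dvd_one hd) ((prime_X_fin (K := K) (2*r) v).not_unit)
    · intro hv; exact absurd (hv ▸ v.isLt) h

lemma X_dvd_pgen_iff (r : ℕ) (j : Fin (r + 1)) (v : Fin (2 * r)) :
    (X v : MvPolynomial (Fin (2 * r)) K) ∣ pgen r K j ↔
      ((Even v.val → v.val < 2 * j.val) ∧ (Odd v.val → 2 * j.val ≤ v.val)) := by
  have hp : Prime (X v : MvPolynomial (Fin (2 * r)) K) := prime_X_fin _ v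
  unfold pgen
  split_ifs with h0
  · rw [hp.dvd_finset_prod_iff]
    simp only [X_dvd_xvar_iff, Finset.mem_range, h0, Nat.even_iff, Nat.odd_iff]
    constructor
    · rintro ⟨t, ht, hvt⟩; omega
    · rintro ⟨he, ho⟩
      rcases Nat.mod_two_eq_zero_or_one v.val with hv | hv
      · exact absurd (he hv) (by omega)
      · exact ⟨v.val / 2, by have := v.isLt; omega, by omega⟩
  · rw [hp.dvd_mul, hp.dvd_mul, hp.dvd_finset_prod_iff, hp.dvd_finset_prod_iff]
    simp only [X_dvd_xvar_iff, Finset.mem_Ico, Nat.even_iff, Nat.odd_iff]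
    have hj0 : 1 ≤ j.val := Nat.pos_of_ne_zero h0
    constructor
    · rintro ((hv | ⟨t, ht, hvt⟩) | ⟨t, ht, hvt⟩) <;>
        exact ⟨fun he => by omega, fun ho => by omega⟩
    · rintro ⟨he, ho⟩
      rcases Nat.mod_two_eq_zero_or_one v.val with hv | hv
      · have hvlt := he hv
        rcases Nat.eq_zero_or_pos v.val with hv0 | hv0
        · exact Or.inl (Or.inl hv0)
        · exact Or.inl (Or.inr ⟨v.val / 2, by omega, by omega⟩)
      · have hvge := ho hv
        have := v.isLt
        exact Or.inr ⟨v.val / 2, by omega, by omega⟩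

/-- the sequence `p_1, p_3, …, p_{2r+1}` of maximal-order
Pfaffians of the tridiagonal skew-symmetric matrix (squarefree monomials)
is of interval type: for indices `i ≤ k ≤ j` in the sequence, any variable
dividing both `p_i` and `p_j` divides `p_k`. -/
theorem tridiagonal_pfaffians_interval_type
    (r : ℕ) (i k j : Fin (r + 1)) (hik : i ≤ k) (hkj : k ≤ j)
    (v : Fin (2 * r))
    (hi : (X v : MvPolynomial (Fin (2 * r)) K) ∣ pgen r K i)
    (hj : (X v : MvPolynomial (Fin (2 * r)) K) ∣ pgen r K j) :
    (X v : MvPolynomial (Fin (2 * r)) K) ∣ pgen r K k := by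
  rw [X_dvd_pgen_iff] at hi hj ⊢
  obtain ⟨hie, _⟩ := hi
  obtain ⟨_, hjo⟩ := hj
  have hik' : i.val ≤ k.val := hik
  have hkj' : k.val ≤ j.val := hkj
  exact ⟨fun he => lt_of_lt_of_le (hie he) (by omega),
         fun ho => le_trans (by omega) (hjo ho)⟩
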